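/- Let k ≥ 0 be an integer and let n be an integer with 3·2^k ≤ n ≤ 3·2^{k+1}. Then there exists a triangulation T of the n-gon with TCL(T) = n(k+2) − 3·2^{k+1}. -/

import Mathlib

open scoped Classical

/-- The cyclic distance between two vertices of the `n`-gon labeled by `ZMod n`:
`min (k, n - k)` where `k` is the representative of `b - a`. -/
def cycDist {n : ℕ} (a b : ZMod n) : ℕ := min (b - a).val (a - b).val

/-- The length of an unordered pair of vertices (in particular, of a chord). -/
def chordLen {n : ℕ} (p : Sym2 (ZMod n)) : ℕ :=
  Sym2.lift ⟨fun a b => cycDist a b, fun _ _ => min_comm _ _⟩ p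

/-- `x` lies strictly inside the clockwise arc from `a` to `b`. -/
def InArc {n : ℕ} (a b x : ZMod n) : Prop :=
  0 < (x - a).val ∧ (x - a).val < (b - a).val

/-- Two chords cross: their four endpoints are distinct and exactly one endpoint of the
second chord lies strictly inside the clockwise arc from `a` to `b`. -/
def Crosses {n : ℕ} (p q : Sym2 (ZMod n)) : Prop :=
  ∃ a b c d : ZMod n, p = s(a, b) ∧ q = s(c, d) ∧
    a ≠ b ∧ a ≠ c ∧ a ≠ d ∧ b ≠ c ∧ b ≠ d ∧ c ≠ d ∧
    Xor' (InArc a b c) (InArc a b d)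

/-- A triangulation of the `n`-gon: a set of `n - 3` pairwise non-crossing chords
(each chord having length at least 2). -/
def IsTriangulation (n : ℕ) (T : Finset (Sym2 (ZMod n))) : Prop :=
  T.card = n - 3 ∧ (∀ p ∈ T, 2 ≤ chordLen p) ∧
    ∀ p ∈ T, ∀ q ∈ T, p ≠ q → ¬ Crosses p q

/-- The total chord length of a triangulation. -/
def TCL (n : ℕ) (T : Finset (Sym2 (ZMod n))) : ℕ := ∑ p ∈ T, chordLen p

/-- A diameter is a chord of length `n / 2` (only possible for `n` even). -/
def IsDiameter {n : ℕ} (p : Sym2 (ZMod n)) : Prop := 2 * chordLen p = n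

/-- The chord `p` layers the boundary edge `{i, i + 1}`: the edge lies on the (strictly)
shorter of the two arcs between the endpoints of `p`.  (Diameters never layer an edge.) -/
def LayersEdge {n : ℕ} (p : Sym2 (ZMod n)) (i : ZMod n) : Prop :=
  ∃ a b : ZMod n, p = s(a, b) ∧ (b - a).val < (a - b).val ∧ (i - a).val < (b - a).val

/-- The doubled layer number of the boundary edge `{i, i + 1}`:
twice the number of non-diameter chords layering it, plus the number of diameters. -/
noncomputable def mT (n : ℕ) (T : Finset (Sym2 (ZMod n))) (i : ZMod n) : ℕ :=
  2 * (T.filter (fun p => LayersEdge p i ∧ ¬ IsDiameter p)).card +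
    (T.filter (fun p => IsDiameter p)).card

/-- Subdivision of a triangulation of the `n`-gon at the boundary edge `{n-1, 0}`:
re-embed all chords (via representatives in `{0, …, n-1}`) into the `(n+1)`-gon, whose new
vertex `n` lies between `n - 1` and `0`, and add the chord `{n - 1, 0}`. -/
def subdiv (n : ℕ) (T : Finset (Sym2 (ZMod n))) : Finset (Sym2 (ZMod (n + 1))) :=
  T.image (Sym2.map (fun a : ZMod n => ((a.val : ℕ) : ZMod (n + 1)))) ∪
    {s(((n - 1 : ℕ) : ZMod (n + 1)), (0 : ZMod (n + 1)))}

/-- Doubling construction: subdivide every boundary edge of the `m`-gon (old vertex `a`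
becomes `2a` in the `2m`-gon) and add the chord `{2a, 2a+2}` over each new vertex. -/
def doubleTri (m : ℕ) (T : Finset (Sym2 (ZMod m))) : Finset (Sym2 (ZMod (2 * m))) :=
  T.image (Sym2.map (fun a : ZMod m => ((2 * a.val : ℕ) : ZMod (2 * m)))) ∪
    (Finset.range m).image
      (fun a : ℕ => s(((2 * a : ℕ) : ZMod (2 * m)), ((2 * a + 2 : ℕ) : ZMod (2 * m))))


namespace MinTCL

def compat (x y : ℕ × ℕ) : Prop :=
  x.2 ≤ y.1 ∨ y.2 ≤ x.1 ∨ (x.1 ≤ y.1 ∧ y.2 ≤ x.2) ∨ (y.1 ≤ x.1 ∧ x.2 ≤ y.2)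

def bis (a L : ℕ) : Finset (ℕ × ℕ) :=
  if h : L < 2 then ∅ else
    ((if 2 ≤ L / 2 then {(a, a + L / 2)} else ∅) ∪
      (if 2 ≤ L - L / 2 then {(a + L / 2, a + L)} else ∅)) ∪
      (bis a (L / 2) ∪ bis (a + L / 2) (L - L / 2))
termination_by L
decreasing_by all_goals omega

def arcF (a L : ℕ) : Finset (ℕ × ℕ) := (if 2 ≤ L then {(a, a + L)} else ∅) ∪ bis a L

lemma bis_small (a L : ℕ) (h : L < 2) : bis a L = ∅ := by
  rw [bis]; simp [h]

lemma arcF_small (a L : ℕ) (h : L < 2) : arcF a L = ∅ := by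
  simp [arcF, bis_small a L h, show ¬ 2 ≤ L by omega]

lemma arcF_decomp (a L : ℕ) (h : 2 ≤ L) :
    arcF a L = {(a, a + L)} ∪ arcF a (L / 2) ∪ arcF (a + L / 2) (L - L / 2) := by
  have e : a + L / 2 + (L - L / 2) = a + L := by omega
  rw [arcF, bis, dif_neg (by omega : ¬ L < 2)]
  unfold arcF
  rw [e, if_pos h]
  ext x
  simp only [Finset.mem_union]
  tauto

lemma arcF_mem {a L : ℕ} {x : ℕ × ℕ} (hx : x ∈ arcF a L) :
    a ≤ x.1 ∧ x.1 + 2 ≤ x.2 ∧ x.2 ≤ a + L := by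
  induction L using Nat.strong_induction_on generalizing a with
  | _ L ih =>
    by_cases h : L < 2
    · rw [arcF_small a L h] at hx; simp at hx
    · rw [arcF_decomp a L (by omega)] at hx
      simp only [Finset.mem_union, Finset.mem_singleton] at hx
      rcases hx with (hx | hx) | hx
      · subst hx; simp; omega
      · have := ih (L / 2) (by omega) hx; omega
      · have := ih (L - L / 2) (by omega) hx; omega

lemma arcF_card (a L : ℕ) : (arcF a L).card = L - 1 := by
  induction L using Nat.strong_induction_on generalizing a with
  | _ L ih =>
    by_cases h : L < 2
    · rw [arcF_small a L h]; simp; omega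
    · rw [arcF_decomp a L (by omega)]
      have h1 : L / 2 < L := by omega
      have h2 : L - L / 2 < L := by omega
      have d1 : Disjoint (arcF a (L / 2)) (arcF (a + L / 2) (L - L / 2)) := by
        rw [Finset.disjoint_left]
        intro x hx hx'
        have := arcF_mem hx; have := arcF_mem hx'; omega
      have d2 : Disjoint ({(a, a + L)} : Finset (ℕ × ℕ))
          (arcF a (L / 2) ∪ arcF (a + L / 2) (L - L / 2)) := by
        rw [Finset.disjoint_left]
        intro x hx hx'
        simp only [Finset.mem_singleton] at hx
        subst hx
        rcases Finset.mem_union.mp hx' with h' | h' <;>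
          · have := arcF_mem h'; simp at this; omega
      rw [Finset.union_assoc, Finset.card_union_of_disjoint d2,
        Finset.card_union_of_disjoint d1, ih _ h1 a, ih _ h2 (a + L / 2)]
      simp; omega

lemma arcF_laminar {a L : ℕ} {x y : ℕ × ℕ} (hx : x ∈ arcF a L) (hy : y ∈ arcF a L) :
    compat x y := by
  induction L using Nat.strong_induction_on generalizing a with
  | _ L ih =>
    by_cases h : L < 2
    · rw [arcF_small a L h] at hx; simp at hx
    · rw [arcF_decomp a L (by omega)] at hx hy
      simp only [Finset.mem_union, Finset.mem_singleton] at hx hy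
      unfold compat
      rcases hx with (hx | hx) | hx <;> rcases hy with (hy | hy) | hy
      · subst hx; subst hy; omega
      · subst hx; have := arcF_mem hy; simp at this ⊢; omega
      · subst hx; have := arcF_mem hy; simp at this ⊢; omega
      · subst hy; have := arcF_mem hx; simp at this ⊢; omega
      · exact ih _ (by omega) hx hy
      · have := arcF_mem hx; have := arcF_mem hy; omega
      · subst hy; have := arcF_mem hx; simp at this ⊢; omega
      · have := arcF_mem hx; have := arcF_mem hy; omega
      · exact ih _ (by omega) hx hy

lemma sum_arith {L A1 A2 B D : ℕ} (h1 : A1 + A2 + L = D) (h2 : B ≤ A1) (h3 : B ≤ A2) :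
    L + (A1 - B) + (A2 - B) = D - 2 * B := by omega

lemma arcF_sum (k : ℕ) : ∀ L a : ℕ, 2 ^ k ≤ L → L ≤ 2 ^ (k + 1) →
    ∑ x ∈ arcF a L, (x.2 - x.1) = L * (k + 2) - 2 ^ (k + 1) := by
  induction k with
  | zero =>
    intro L a hL1 hL2
    interval_cases L
    · rw [arcF_small a 1 (by omega)]; simp
    · rw [arcF_decomp a 2 (by omega)]
      rw [arcF_small a 1 (by omega)]
      norm_num [arcF_small]
  | succ k ih =>
    intro L a hL1 hL2
    have hP : 1 ≤ 2 ^ k := Nat.one_le_two_pow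
    have hq : 2 ^ (k+1) = 2 * 2 ^ k := by rw [pow_succ]; ring
    have hq2 : 2 ^ (k+2) = 4 * 2 ^ k := by rw [pow_succ, pow_succ]; ring
    have hL : 2 ≤ L := by omega
    have h1 : 2 ^ k ≤ L / 2 := by omega
    have h2 : L / 2 ≤ 2 ^ (k+1) := by omega
    have h3 : 2 ^ k ≤ L - L / 2 := by omega
    have h4 : L - L / 2 ≤ 2 ^ (k+1) := by omega
    have d1 : Disjoint (arcF a (L / 2)) (arcF (a + L / 2) (L - L / 2)) := by
      rw [Finset.disjoint_left]
      intro x hx hx'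
      have := arcF_mem hx; have := arcF_mem hx'; omega
    have d2 : Disjoint ({(a, a + L)} : Finset (ℕ × ℕ))
        (arcF a (L / 2) ∪ arcF (a + L / 2) (L - L / 2)) := by
      rw [Finset.disjoint_left]
      intro x hx hx'
      simp only [Finset.mem_singleton] at hx
      subst hx
      rcases Finset.mem_union.mp hx' with h' | h' <;>
        · have := arcF_mem h'; simp at this; omega
    rw [arcF_decomp a L hL, Finset.union_assoc, Finset.sum_union d2, Finset.sum_union d1,
      ih _ a h1 h2, ih _ (a + L/2) h3 h4]
    simp only [Finset.sum_singleton]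
    have e0 : a + L - a = L := by omega
    have e1 : L / 2 * (k + 2) + (L - L / 2) * (k + 2) + L = L * (k + 1 + 2) := by
      rw [← Nat.add_mul, show L / 2 + (L - L / 2) = L by omega]; ring
    have e4 : 2 ^ (k + 1) ≤ 2 ^ k * (k + 2) := by
      calc 2 ^ (k+1) = 2 ^ k * 2 := by rw [pow_succ]
      _ ≤ _ := Nat.mul_le_mul_left _ (by omega)
    have e2 : 2 ^ (k+1) ≤ L / 2 * (k + 2) :=
      le_trans e4 (Nat.mul_le_mul_right _ h1)
    have e3 : 2 ^ (k+1) ≤ (L - L / 2) * (k + 2) :=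
      le_trans e4 (Nat.mul_le_mul_right _ h3)
    rw [e0, show (2:ℕ)^(k+1+1) = 2*2^(k+1) by rw [pow_succ, Nat.mul_comm], ← Nat.add_assoc]
    exact sum_arith e1 e2 e3


lemma castval (hn : 0 < n) {a : ℕ} (ha : a < n) : ((a : ZMod n)).val = a := by
  haveI : NeZero n := ⟨hn.ne'⟩
  exact ZMod.val_cast_of_lt ha

lemma sub_cast_val (hn : 0 < n) {a b : ℕ} (hab : a ≤ b) (h : b - a < n) :
    ((b : ZMod n) - (a : ZMod n)).val = b - a := by
  haveI : NeZero n := ⟨hn.ne'⟩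
  rw [← Nat.cast_sub hab, ZMod.val_natCast, Nat.mod_eq_of_lt h]

lemma sub_cast_val' (hn : 0 < n) {a b : ℕ} (hab : a ≤ b) (hb : b ≤ n) (h0 : 0 < b - a)
    (h : b - a < n) : ((a : ZMod n) - (b : ZMod n)).val = n - (b - a) := by
  haveI : NeZero n := ⟨hn.ne'⟩
  have e : ((a : ZMod n)) - b = ((a + n - b : ℕ) : ZMod n) := by
    rw [show a + n - b = a + (n - b) by omega, Nat.cast_add, Nat.cast_sub hb,
      ZMod.natCast_self]
    ring
  rw [e, ZMod.val_natCast, Nat.mod_eq_of_lt (by omega)]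
  omega

lemma val_sub (hn : 0 < n) {a : ℕ} (ha : a < n) (x : ZMod n) :
    (x - (a : ZMod n)).val = if a ≤ x.val then x.val - a else x.val + n - a := by
  haveI : NeZero n := ⟨hn.ne'⟩
  have hxv : x.val < n := ZMod.val_lt x
  conv_lhs => rw [← ZMod.natCast_rightInverse x]
  split
  · rw [sub_cast_val hn (by assumption) (by omega)]
  · rw [show ((x.val : ZMod n)) - a = ((x.val + n - a : ℕ) : ZMod n) by
      rw [show x.val + n - a = x.val + (n - a) by omega, Nat.cast_add,
        Nat.cast_sub ha.le, ZMod.natCast_self]; ring]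
    rw [ZMod.val_natCast, Nat.mod_eq_of_lt (by omega)]

lemma inArc_iff (hn : 0 < n) {a b : ℕ} (h1 : a < b) (h2 : b ≤ n) (h3 : b - a < n)
    (x : ZMod n) : InArc (a : ZMod n) (b : ZMod n) x ↔ a < x.val ∧ x.val < b := by
  haveI : NeZero n := ⟨hn.ne'⟩
  have hxv : x.val < n := ZMod.val_lt x
  unfold InArc
  rw [sub_cast_val hn h1.le h3, val_sub hn (by omega) x]
  split <;> omega

lemma inArc_rev_iff (hn : 0 < n) {a b : ℕ} (h1 : a < b) (h2 : b ≤ n) (h3 : b - a < n)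
    {x : ZMod n} (hx : x ≠ (b : ZMod n)) :
    InArc (b : ZMod n) (a : ZMod n) x ↔ (x.val < a ∨ b < x.val) := by
  haveI : NeZero n := ⟨hn.ne'⟩
  have hxv : x.val < n := ZMod.val_lt x
  have hbm : (b = n ∧ b % n = 0) ∨ (b < n ∧ b % n = b) := by
    rcases eq_or_lt_of_le h2 with h | h
    · left; exact ⟨h, by rw [h]; exact Nat.mod_self n⟩
    · right; exact ⟨h, Nat.mod_eq_of_lt h⟩
  have hxb : x.val ≠ b % n := by
    intro h
    apply hx
    rw [← ZMod.natCast_rightInverse x, h, ZMod.natCast_mod]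
  have hcast : ((b : ZMod n)) = ((b % n : ℕ) : ZMod n) := (ZMod.natCast_mod b n).symm
  unfold InArc
  rw [sub_cast_val' hn h1.le h2 (by omega) h3, hcast,
    val_sub hn (Nat.mod_lt _ hn) x]
  split <;> omega

lemma chordLen_pair (hn : 0 < n) {a b : ℕ} (h1 : a < b) (h2 : b ≤ n)
    (h4 : 2 * (b - a) ≤ n) :
    chordLen (s((a : ZMod n), (b : ZMod n))) = b - a := by
  have h3 : b - a < n := by omega
  show cycDist (a : ZMod n) (b : ZMod n) = b - a
  unfold cycDist
  rw [sub_cast_val hn h1.le h3, sub_cast_val' hn h1.le h2 (by omega) h3]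
  omega

lemma mod_spec (hn : 0 < n) {b : ℕ} (hb : b ≤ n) :
    (b = n ∧ b % n = 0) ∨ (b < n ∧ b % n = b) := by
  rcases eq_or_lt_of_le hb with h | h
  · left; exact ⟨h, by rw [h]; exact Nat.mod_self n⟩
  · right; exact ⟨h, Nat.mod_eq_of_lt h⟩

lemma chord_inj (hn : 0 < n) {a b c d : ℕ} (hab : a < b) (hb : b ≤ n) (h2 : 2 * (b - a) ≤ n)
    (hcd : c < d) (hd : d ≤ n) (h2' : 2 * (d - c) ≤ n)
    (h5 : ¬(a = 0 ∧ d = n ∧ b = c)) (h6 : ¬(c = 0 ∧ b = n ∧ a = d))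
    (h : s((a : ZMod n), (b : ZMod n)) = s((c : ZMod n), (d : ZMod n))) :
    (a, b) = (c, d) := by
  haveI : NeZero n := ⟨hn.ne'⟩
  have hbm := mod_spec hn hb
  have hdm := mod_spec hn hd
  have ha : a < n := by omega
  have hc : c < n := by omega
  rw [Sym2.eq_iff] at h
  rcases h with ⟨e1, e2⟩ | ⟨e1, e2⟩
  · have f1 : a = c := by
      have := congrArg ZMod.val e1
      rwa [castval hn ha, castval hn hc] at this
    have f2 : b % n = d % n := by
      have := congrArg ZMod.val e2
      rwa [ZMod.val_natCast, ZMod.val_natCast] at this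
    have : b = d := by omega
    simp [f1, this]
  · have f1 : a = d % n := by
      have := congrArg ZMod.val e1
      rwa [castval hn ha, ZMod.val_natCast] at this
    have f2 : b % n = c := by
      have := congrArg ZMod.val e2
      rwa [ZMod.val_natCast, castval hn hc] at this
    exfalso
    omega

lemma no_cross (hn : 0 < n) {a b c d : ℕ} (hab : a < b) (hb : b ≤ n) (h2 : 2 * (b - a) ≤ n)
    (hcd : c < d) (hd : d ≤ n) (h2' : 2 * (d - c) ≤ n)
    (hcomp : compat (a, b) (c, d)) :
    ¬ Crosses (s((a : ZMod n), (b : ZMod n))) (s((c : ZMod n), (d : ZMod n))) := by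
  haveI : NeZero n := ⟨hn.ne'⟩
  rintro ⟨a', b', c', d', hp, hq, nab, nac, nad, nbc, nbd, ncd, hxor⟩
  have ha : a < n := by omega
  have hc : c < n := by omega
  have h3 : b - a < n := by omega
  have h3' : d - c < n := by omega
  have hbm := mod_spec hn hb
  have hdm := mod_spec hn hd
  -- distinctness of the underlying vertices
  have ne1 : (a : ZMod n) ≠ (c : ZMod n) := by
    rw [Sym2.eq_iff] at hp hq
    rcases hp with ⟨e1, e2⟩ | ⟨e1, e2⟩ <;> rcases hq with ⟨f1, f2⟩ | ⟨f1, f2⟩ <;>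
      simp_all
  have ne2 : (a : ZMod n) ≠ (d : ZMod n) := by
    rw [Sym2.eq_iff] at hp hq
    rcases hp with ⟨e1, e2⟩ | ⟨e1, e2⟩ <;> rcases hq with ⟨f1, f2⟩ | ⟨f1, f2⟩ <;>
      simp_all
  have ne3 : (b : ZMod n) ≠ (c : ZMod n) := by
    rw [Sym2.eq_iff] at hp hq
    rcases hp with ⟨e1, e2⟩ | ⟨e1, e2⟩ <;> rcases hq with ⟨f1, f2⟩ | ⟨f1, f2⟩ <;>
      simp_all
  have ne4 : (b : ZMod n) ≠ (d : ZMod n) := by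
    rw [Sym2.eq_iff] at hp hq
    rcases hp with ⟨e1, e2⟩ | ⟨e1, e2⟩ <;> rcases hq with ⟨f1, f2⟩ | ⟨f1, f2⟩ <;>
      simp_all
  have g1 : a ≠ c := fun h => ne1 (by rw [h])
  have g2 : a ≠ d % n := fun h => ne2 (by rw [h, ZMod.natCast_mod])
  have g3 : b % n ≠ c := fun h => ne3 (by rw [← h, ZMod.natCast_mod])
  have g4 : b % n ≠ d % n := fun h => ne4 (by
    rw [← ZMod.natCast_mod b n, h, ZMod.natCast_mod])
  -- reduce the Xor to a statement about (↑c) and (↑d)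
  have key : Xor' (a < ((c:ZMod n)).val ∧ ((c:ZMod n)).val < b)
      (a < ((d:ZMod n)).val ∧ ((d:ZMod n)).val < b) := by
    have swap : ∀ P Q : Prop, Xor' P Q → Xor' Q P := by
      intro P Q h; unfold Xor' Xor at *; tauto
    have main : ∀ x y : ZMod n, x ≠ (a:ZMod n) → x ≠ (b:ZMod n) →
        y ≠ (a:ZMod n) → y ≠ (b:ZMod n) →
        (Xor' (InArc (a:ZMod n) (b:ZMod n) x) (InArc (a:ZMod n) (b:ZMod n) y) ∨
         Xor' (InArc (b:ZMod n) (a:ZMod n) x) (InArc (b:ZMod n) (a:ZMod n) y)) →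
        Xor' (a < x.val ∧ x.val < b) (a < y.val ∧ y.val < b) := by
      intro x y hxa hxb hya hyb hh
      have hxv : x.val < n := ZMod.val_lt x
      have hyv : y.val < n := ZMod.val_lt y
      have hxa' : x.val ≠ a := fun h => hxa (by rw [← ZMod.natCast_rightInverse x, h])
      have hya' : y.val ≠ a := fun h => hya (by rw [← ZMod.natCast_rightInverse y, h])
      have hxb' : x.val ≠ b % n := fun h => hxb (by
        rw [← ZMod.natCast_rightInverse x, h, ZMod.natCast_mod])
      have hyb' : y.val ≠ b % n := fun h => hyb (by
        rw [← ZMod.natCast_rightInverse y, h, ZMod.natCast_mod])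
      rcases hh with hh | hh
      · rwa [inArc_iff hn hab hb h3, inArc_iff hn hab hb h3] at hh
      · rw [inArc_rev_iff hn hab hb h3 hxb, inArc_rev_iff hn hab hb h3 hyb] at hh
        unfold Xor' Xor at hh ⊢
        omega
    rcases Sym2.eq_iff.mp hp with ⟨e1, e2⟩ | ⟨e1, e2⟩ <;>
      rcases Sym2.eq_iff.mp hq with ⟨f1, f2⟩ | ⟨f1, f2⟩ <;>
        subst e1 <;> subst e2 <;> subst f1 <;> subst f2
    · exact main _ _ (Ne.symm nac) (Ne.symm nbc) (Ne.symm nad) (Ne.symm nbd) (Or.inl hxor)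
    · exact swap _ _
        (main _ _ (Ne.symm nac) (Ne.symm nbc) (Ne.symm nad) (Ne.symm nbd) (Or.inl hxor))
    · exact main _ _ (Ne.symm nbc) (Ne.symm nac) (Ne.symm nbd) (Ne.symm nad) (Or.inr hxor)
    · exact swap _ _
        (main _ _ (Ne.symm nbc) (Ne.symm nac) (Ne.symm nbd) (Ne.symm nad) (Or.inr hxor))
  rw [castval hn hc, ZMod.val_natCast] at key
  unfold compat at hcomp
  unfold Xor' Xor at key
  simp only at hcomp
  omega


lemma sum_arith3 {A1 A2 A3 B C : ℕ} (h : A1 + A2 + A3 = C) (g1 : B ≤ A1) (g2 : B ≤ A2)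
    (g3 : B ≤ A3) : (A1 - B) + (A2 - B) + (A3 - B) = C - 3 * B := by omega

end MinTCL

/-- For `k ≥ 0` and `3·2^k ≤ n ≤ 3·2^(k+1)`, there exists a triangulation `T`
of the `n`-gon with `TCL(T) = n(k+2) - 3·2^(k+1)`. -/
theorem min_TCL_attained (k n : ℕ) (h1 : 3 * 2 ^ k ≤ n) (h2 : n ≤ 3 * 2 ^ (k + 1)) :
    ∃ T : Finset (Sym2 (ZMod n)), IsTriangulation n T ∧
      TCL n T = n * (k + 2) - 3 * 2 ^ (k + 1) := by
  classical
  open MinTCL in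
  have hP : 1 ≤ 2 ^ k := Nat.one_le_two_pow
  have hpow : (2 : ℕ) ^ (k + 1) = 2 * 2 ^ k := by rw [pow_succ]; ring
  have hn : 0 < n := by omega
  obtain ⟨p, q, hb1, hb2, hb3, hb4, hb5, hb6, hpq, hqn⟩ :
      ∃ p q : ℕ, 2 ^ k ≤ p ∧ p ≤ 2 ^ (k + 1) ∧ 2 ^ k ≤ q - p ∧ q - p ≤ 2 ^ (k + 1) ∧
        2 ^ k ≤ n - q ∧ n - q ≤ 2 ^ (k + 1) ∧ p < q ∧ q < n := by
    rcases le_total (2 * 2 ^ k) (n - 2 * 2 ^ k) with h | h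
    · exact ⟨2 * 2 ^ k, 2 * 2 ^ k + (n - 2 * 2 ^ k) / 2, by omega, by omega, by omega,
        by omega, by omega, by omega, by omega, by omega⟩
    · exact ⟨n - 2 * 2 ^ k, n - 2 * 2 ^ k + 2 ^ k, by omega, by omega, by omega,
        by omega, by omega, by omega, by omega, by omega⟩
  set A := arcF 0 p with hA
  set B := arcF p (q - p) with hB
  set C := arcF q (n - q) with hC
  set F := A ∪ B ∪ C with hF
  have memF : ∀ x ∈ F, x.1 + 2 ≤ x.2 ∧ x.2 ≤ n ∧ 2 * (x.2 - x.1) ≤ n ∧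
      (x.2 ≤ p ∨ (p ≤ x.1 ∧ x.2 ≤ q) ∨ q ≤ x.1) := by
    intro x hx
    simp only [hF, hA, hB, hC, Finset.mem_union] at hx
    rcases hx with (hx | hx) | hx
    · have H := arcF_mem hx; exact ⟨by omega, by omega, by omega, by omega⟩
    · have H := arcF_mem hx; exact ⟨by omega, by omega, by omega, by omega⟩
    · have H := arcF_mem hx; exact ⟨by omega, by omega, by omega, by omega⟩
  have compF : ∀ x ∈ F, ∀ y ∈ F, compat x y := by
    intro x hx y hy
    simp only [hF, hA, hB, hC, Finset.mem_union] at hx hy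
    rcases hx with (hx | hx) | hx <;> rcases hy with (hy | hy) | hy <;>
      first
        | exact arcF_laminar hx hy
        | (have H1 := arcF_mem hx; have H2 := arcF_mem hy; unfold compat; omega)
  have hinj : ∀ x ∈ F, ∀ y ∈ F,
      s(((x.1 : ℕ) : ZMod n), ((x.2 : ℕ) : ZMod n)) =
        s(((y.1 : ℕ) : ZMod n), ((y.2 : ℕ) : ZMod n)) → x = y := by
    intro x hx y hy hxy
    have Hx := memF x hx
    have Hy := memF y hy
    have h5 : ¬(x.1 = 0 ∧ y.2 = n ∧ x.2 = y.1) := by omega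
    have h6 : ¬(y.1 = 0 ∧ x.2 = n ∧ x.1 = y.2) := by omega
    have := chord_inj hn (show x.1 < x.2 by omega) (by omega) (by omega)
      (show y.1 < y.2 by omega) (by omega) (by omega) h5 h6 hxy
    rw [Prod.mk.eta, Prod.mk.eta] at this
    exact this
  have dAB : Disjoint A B := by
    rw [Finset.disjoint_left]
    intro x hx hx'
    have H1 := arcF_mem hx
    have H2 := arcF_mem hx'
    omega
  have dABC : Disjoint (A ∪ B) C := by
    rw [Finset.disjoint_left]
    intro x hx hx'
    have H2 := arcF_mem hx'
    rcases Finset.mem_union.mp hx with h | h <;> · have H1 := arcF_mem h; omega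
  refine ⟨F.image (fun x : ℕ × ℕ => s(((x.1 : ℕ) : ZMod n), ((x.2 : ℕ) : ZMod n))),
    ⟨?_, ?_, ?_⟩, ?_⟩
  · rw [Finset.card_image_of_injOn fun x hx y hy h => hinj x hx y hy h, hF,
      Finset.card_union_of_disjoint dABC, Finset.card_union_of_disjoint dAB, hA, hB, hC,
      arcF_card, arcF_card, arcF_card]
    omega
  · intro c hc
    obtain ⟨x, hx, rfl⟩ := Finset.mem_image.mp hc
    have Hx := memF x hx
    rw [chordLen_pair hn (show x.1 < x.2 by omega) (by omega) (by omega)]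
    omega
  · intro c hc c' hc' hne
    obtain ⟨x, hx, rfl⟩ := Finset.mem_image.mp hc
    obtain ⟨y, hy, rfl⟩ := Finset.mem_image.mp hc'
    have Hx := memF x hx
    have Hy := memF y hy
    exact no_cross hn (show x.1 < x.2 by omega) (by omega) (by omega)
      (show y.1 < y.2 by omega) (by omega) (by omega) (compF x hx y hy)
  · rw [TCL, Finset.sum_image fun x hx y hy h => hinj x hx y hy h]
    have e : ∑ x ∈ F, chordLen s(((x.1 : ℕ) : ZMod n), ((x.2 : ℕ) : ZMod n)) =
        ∑ x ∈ F, (x.2 - x.1) := by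
      apply Finset.sum_congr rfl
      intro x hx
      have Hx := memF x hx
      exact chordLen_pair hn (show x.1 < x.2 by omega) (by omega) (by omega)
    rw [e, hF, Finset.sum_union dABC, Finset.sum_union dAB, hA, hB, hC,
      arcF_sum k p 0 hb1 hb2, arcF_sum k (q - p) p hb3 hb4, arcF_sum k (n - q) q hb5 hb6]
    have e4 : 2 ^ (k + 1) ≤ 2 ^ k * (k + 2) := by
      calc 2 ^ (k + 1) = 2 ^ k * 2 := by rw [pow_succ]
      _ ≤ _ := Nat.mul_le_mul_left _ (by omega)
    have g1 : 2 ^ (k + 1) ≤ p * (k + 2) := le_trans e4 (Nat.mul_le_mul_right _ hb1)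
    have g2 : 2 ^ (k + 1) ≤ (q - p) * (k + 2) := le_trans e4 (Nat.mul_le_mul_right _ hb3)
    have g3 : 2 ^ (k + 1) ≤ (n - q) * (k + 2) := le_trans e4 (Nat.mul_le_mul_right _ hb5)
    have hsum : p * (k + 2) + (q - p) * (k + 2) + (n - q) * (k + 2) = n * (k + 2) := by
      rw [← Nat.add_mul, ← Nat.add_mul, show p + (q - p) + (n - q) = n by omega]
    exact sum_arith3 hsum g1 g2 g3
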